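/- Let τ be a C² function on a punctured disk such that ∂∂̄(τ) ≥ 0 (τ is subharmonic) on 0 < |z| ≤ r₀, and suppose |τ(z)| ≲ |z|^{2−2a} for some 1/2 < a < 1 (so τ(z) → 0 as z → 0). Then, with τ̃(r) = ∫₀^{2π} τ(r, φ) dφ, the limit lim_{r→0} r · dτ̃/dr exists and equals 0, and consequently lim over ε > δ → 0 of ∫_{δ<|z|<ε} (√−1/2) ∂∂̄τ = 0. -/

import Mathlib

open Complex MeasureTheory Metric Set Filter Topology
open intervalIntegral

/-- Wirtinger derivative `∂/∂z̄`. -/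
noncomputable def dbar (f : ℂ → ℂ) (z : ℂ) : ℂ :=
  (fderiv ℝ f z 1 + Complex.I * fderiv ℝ f z Complex.I) / 2

/-- Wirtinger derivative `∂/∂z`. -/
noncomputable def dz (f : ℂ → ℂ) (z : ℂ) : ℂ :=
  (fderiv ℝ f z 1 - Complex.I * fderiv ℝ f z Complex.I) / 2

/-- The operator `∂z ∂z̄` applied to a real-valued function. -/
noncomputable def lapC (τ : ℂ → ℝ) (z : ℂ) : ℂ :=
  dbar (dz fun w => (τ w : ℂ)) z

/-! ### Auxiliary lemmas -/

/-- Differentiation under the interval integral, with continuity hypotheses. -/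
lemma hasDerivAt_param (F F' : ℝ → ℝ → ℝ) {J : Set ℝ} (hJ : IsOpen J) {r : ℝ} (hr : r ∈ J)
    (hdiff : ∀ x ∈ J, ∀ θ : ℝ, HasDerivAt (fun y => F y θ) (F' x θ) x)
    (hcont : ContinuousOn (fun p : ℝ × ℝ => F' p.1 p.2) (J ×ˢ (univ : Set ℝ)))
    (hFcont : ∀ x ∈ J, Continuous fun θ => F x θ) :
    HasDerivAt (fun x => ∫ θ in (0:ℝ)..(2*Real.pi), F x θ)
      (∫ θ in (0:ℝ)..(2*Real.pi), F' r θ) r := by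
  obtain ⟨ε, hε, hball⟩ := Metric.isOpen_iff.1 hJ r hr
  have hball2 : Metric.closedBall r (ε/2) ⊆ J :=
    (Metric.closedBall_subset_ball (by linarith)).trans hball
  have hK : IsCompact ((Metric.closedBall r (ε/2)) ×ˢ (Icc (0:ℝ) (2*Real.pi))) :=
    (isCompact_closedBall _ _).prod isCompact_Icc
  obtain ⟨C, hC⟩ := hK.exists_bound_of_continuousOn
    (hcont.mono (prod_mono hball2 (subset_univ _)))
  have key := hasDerivAt_integral_of_dominated_loc_of_deriv_le (F := F) (F' := F')
    (x₀ := r) (μ := volume) (a := 0) (b := 2*Real.pi) (bound := fun _ => C) (Metric.ball_mem_nhds r (half_pos hε))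
    ?_ ?_ ?_ ?_ ?_ ?_
  · exact key.2
  · filter_upwards [hJ.mem_nhds hr] with x hx
    exact (hFcont x hx).aestronglyMeasurable
  · exact ((hFcont r hr).intervalIntegrable _ _)
  · refine Continuous.aestronglyMeasurable ?_
    exact hcont.comp_continuous (continuous_const.prodMk continuous_id)
      (fun θ => ⟨hr, mem_univ _⟩)
  · filter_upwards with θ hθ x hx
    have hxJ : x ∈ Metric.closedBall r (ε/2) := Metric.ball_subset_closedBall hx
    rw [Set.uIoc_of_le Real.two_pi_pos.le] at hθ
    exact hC (x, θ) ⟨hxJ, hθ.1.le, hθ.2⟩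
  · exact intervalIntegrable_const
  · filter_upwards with θ hθ x hx
    exact hdiff x (hball (Metric.ball_subset_ball (by linarith) hx)) θ

lemma continuousOn_param (F : ℝ → ℝ → ℝ) {J : Set ℝ} (hJ : IsOpen J)
    (hcont : ContinuousOn (fun p : ℝ × ℝ => F p.1 p.2) (J ×ˢ (univ : Set ℝ))) :
    ContinuousOn (fun x => ∫ θ in (0:ℝ)..(2*Real.pi), F x θ) J := by
  intro r hr
  apply ContinuousAt.continuousWithinAt
  obtain ⟨ε, hε, hball⟩ := Metric.isOpen_iff.1 hJ r hr
  have hball2 : Metric.closedBall r (ε/2) ⊆ J :=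
    (Metric.closedBall_subset_ball (by linarith)).trans hball
  have hK : IsCompact ((Metric.closedBall r (ε/2)) ×ˢ (Icc (0:ℝ) (2*Real.pi))) :=
    (isCompact_closedBall _ _).prod isCompact_Icc
  obtain ⟨C, hC⟩ := hK.exists_bound_of_continuousOn
    (hcont.mono (prod_mono hball2 (subset_univ _)))
  have hJopen : IsOpen (J ×ˢ (univ : Set ℝ)) := hJ.prod isOpen_univ
  apply intervalIntegral.continuousAt_of_dominated_interval
    (bound := fun _ => C) (μ := volume)
  · filter_upwards [hJ.mem_nhds hr] with x hx
    exact ((hcont.comp_continuous (continuous_const.prodMk continuous_id)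
      (fun θ => ⟨hx, mem_univ _⟩)) : Continuous fun θ => F x θ).aestronglyMeasurable
  · filter_upwards [Metric.closedBall_mem_nhds r (half_pos hε)] with x hx
    filter_upwards with θ hθ
    rw [Set.uIoc_of_le Real.two_pi_pos.le] at hθ
    exact hC (x, θ) ⟨hx, hθ.1.le, hθ.2⟩
  · exact intervalIntegrable_const
  · filter_upwards with θ hθ
    have h1 : ContinuousAt (fun p : ℝ × ℝ => F p.1 p.2) (r, θ) :=
      hcont.continuousAt (hJopen.mem_nhds ⟨hr, mem_univ _⟩)
    have h2 : ContinuousAt (fun x : ℝ => (x, θ)) r :=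
      (continuous_id.prodMk continuous_const).continuousAt
    exact ContinuousAt.comp (g := fun p : ℝ × ℝ => F p.1 p.2)
      (f := fun x : ℝ => (x, θ)) (x := r) h1 h2

noncomputable def ee (θ : ℝ) : ℂ := Complex.exp (θ * Complex.I)

lemma ee_eq (θ : ℝ) : ee θ = Real.cos θ + Real.sin θ * Complex.I := by
  simp [ee, Complex.exp_mul_I, ← Complex.ofReal_cos, ← Complex.ofReal_sin]

lemma continuous_ee : Continuous ee :=
  Complex.continuous_exp.comp (Complex.continuous_ofReal.mul continuous_const)

lemma norm_ee (θ : ℝ) : ‖ee θ‖ = 1 := by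
  simp [ee, Complex.norm_exp_ofReal_mul_I]

lemma ee_periodic : Function.Periodic ee (2 * Real.pi) := by
  intro θ
  simp only [ee]
  push_cast
  rw [add_mul, Complex.exp_add]
  simp [Complex.exp_two_pi_mul_I]

lemma hasDerivAt_ofReal_mul (x : ℝ) (c : ℂ) :
    HasDerivAt (fun y : ℝ => (y : ℂ) * c) c x := by
  simpa using ((hasDerivAt_id x).ofReal_comp.mul_const c)

lemma hasDerivAt_ee (θ : ℝ) : HasDerivAt ee (ee θ * Complex.I) θ := by
  have h := (hasDerivAt_ofReal_mul θ Complex.I).cexp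
  exact h

lemma hasDerivAt_phi_theta (r : ℝ) (θ : ℝ) :
    HasDerivAt (fun θ' : ℝ => (r : ℂ) * ee θ') ((r : ℂ) * ee θ * Complex.I) θ := by
  simpa [mul_assoc] using (hasDerivAt_ee θ).const_mul (r : ℂ)

lemma norm_phi (r θ : ℝ) (hr : 0 ≤ r) : ‖(r : ℂ) * ee θ‖ = r := by
  rw [norm_mul, norm_ee, Complex.norm_real, Real.norm_eq_abs, _root_.abs_of_nonneg hr, mul_one]

lemma isOpen_UU (r0 : ℝ) : IsOpen {z : ℂ | 0 < ‖z‖ ∧ ‖z‖ < r0} := by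
  have h1 : IsOpen {z : ℂ | 0 < ‖z‖} := isOpen_lt continuous_const continuous_norm
  have h2 : IsOpen {z : ℂ | ‖z‖ < r0} := isOpen_lt continuous_norm continuous_const
  exact h1.inter h2
variable {r0 : ℝ} {τ : ℂ → ℝ}

lemma contDiffOn_tau (hτ : ContDiffOn ℝ 2 (fun w => (τ w : ℂ)) {z : ℂ | 0 < ‖z‖ ∧ ‖z‖ ≤ r0}) :
    ContDiffOn ℝ 2 τ {z : ℂ | 0 < ‖z‖ ∧ ‖z‖ < r0} := by
  have h := (Complex.reCLM.contDiff (n := 2)).comp_contDiffOn hτ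
  have h2 : ContDiffOn ℝ 2 τ {z : ℂ | 0 < ‖z‖ ∧ ‖z‖ ≤ r0} := by
    apply h.congr
    intro w _
    simp
  exact h2.mono (fun z hz => ⟨hz.1, hz.2.le⟩)

lemma tau_contDiffAt (hτ : ContDiffOn ℝ 2 (fun w => (τ w : ℂ)) {z : ℂ | 0 < ‖z‖ ∧ ‖z‖ ≤ r0})
    {z : ℂ} (hz : z ∈ {z : ℂ | 0 < ‖z‖ ∧ ‖z‖ < r0}) : ContDiffAt ℝ 2 τ z :=
  (contDiffOn_tau hτ).contDiffAt ((isOpen_UU r0).mem_nhds hz)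

lemma hasFDerivAt_tau (hτ : ContDiffOn ℝ 2 (fun w => (τ w : ℂ)) {z : ℂ | 0 < ‖z‖ ∧ ‖z‖ ≤ r0})
    {z : ℂ} (hz : z ∈ {z : ℂ | 0 < ‖z‖ ∧ ‖z‖ < r0}) :
    HasFDerivAt τ (fderiv ℝ τ z) z :=
  ((tau_contDiffAt hτ hz).differentiableAt (by norm_num)).hasFDerivAt

lemma hasFDerivAt_fderiv_tau (hτ : ContDiffOn ℝ 2 (fun w => (τ w : ℂ)) {z : ℂ | 0 < ‖z‖ ∧ ‖z‖ ≤ r0})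
    {z : ℂ} (hz : z ∈ {z : ℂ | 0 < ‖z‖ ∧ ‖z‖ < r0}) :
    HasFDerivAt (fderiv ℝ τ) (fderiv ℝ (fderiv ℝ τ) z) z := by
  have h : ContDiffAt ℝ 1 (fderiv ℝ τ) z :=
    (tau_contDiffAt hτ hz).fderiv_right (by norm_num)
  exact (h.differentiableAt (by norm_num)).hasFDerivAt

lemma continuousOn_fderiv_tau
    (hτ : ContDiffOn ℝ 2 (fun w => (τ w : ℂ)) {z : ℂ | 0 < ‖z‖ ∧ ‖z‖ ≤ r0}) :
    ContinuousOn (fderiv ℝ τ) {z : ℂ | 0 < ‖z‖ ∧ ‖z‖ < r0} :=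
  (contDiffOn_tau hτ).continuousOn_fderiv_of_isOpen (isOpen_UU r0) (by norm_num)

lemma continuousOn_fderiv2_tau
    (hτ : ContDiffOn ℝ 2 (fun w => (τ w : ℂ)) {z : ℂ | 0 < ‖z‖ ∧ ‖z‖ ≤ r0}) :
    ContinuousOn (fderiv ℝ (fderiv ℝ τ)) {z : ℂ | 0 < ‖z‖ ∧ ‖z‖ < r0} := by
  have h1 : ContDiffOn ℝ 1 (fderiv ℝ τ) {z : ℂ | 0 < ‖z‖ ∧ ‖z‖ < r0} :=
    (contDiffOn_tau hτ).fderiv_of_isOpen (isOpen_UU r0) (by norm_num)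
  exact h1.continuousOn_fderiv_of_isOpen (isOpen_UU r0) (by norm_num)


lemma lapC_eq (hτ : ContDiffOn ℝ 2 (fun w => (τ w : ℂ)) {z : ℂ | 0 < ‖z‖ ∧ ‖z‖ ≤ r0})
    {z : ℂ} (hz : z ∈ {z : ℂ | 0 < ‖z‖ ∧ ‖z‖ < r0}) :
    (lapC τ z).re =
      (fderiv ℝ (fderiv ℝ τ) z 1 1 + fderiv ℝ (fderiv ℝ τ) z Complex.I Complex.I) / 4 := by
  set D2 := fderiv ℝ (fderiv ℝ τ) with hD2def
  have hev : (fun w => dz (fun w' => (τ w' : ℂ)) w) =ᶠ[𝓝 z]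
      fun w => (2⁻¹ : ℂ) * (((fderiv ℝ τ w 1 : ℝ) : ℂ) - Complex.I * ((fderiv ℝ τ w Complex.I : ℝ) : ℂ)) := by
    filter_upwards [(isOpen_UU r0).mem_nhds hz] with w hw
    have hfd : fderiv ℝ (fun w' => (τ w' : ℂ)) w = Complex.ofRealCLM.comp (fderiv ℝ τ w) :=
      (Complex.ofRealCLM.hasFDerivAt.comp w (hasFDerivAt_tau hτ hw)).fderiv
    simp [dz, hfd, div_eq_inv_mul]
  have hq : ∀ v : ℂ, HasFDerivAt (fun w => ((fderiv ℝ τ w v : ℝ) : ℂ))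
      (Complex.ofRealCLM.comp ((ContinuousLinearMap.apply ℝ ℝ v).comp (D2 z))) z := fun v =>
    Complex.ofRealCLM.hasFDerivAt.comp z
      ((ContinuousLinearMap.apply ℝ ℝ v).hasFDerivAt.comp z (hasFDerivAt_fderiv_tau hτ hz))
  have hdz := ((hq 1).sub ((hq Complex.I).const_mul Complex.I)).const_mul (2⁻¹ : ℂ)
  have hfe := hev.fderiv_eq.trans hdz.fderiv
  have e : ∀ ξ : ℂ, fderiv ℝ (dz fun w => (τ w : ℂ)) z ξ =
      (((D2 z ξ 1 : ℝ) : ℂ) - Complex.I * ((D2 z ξ Complex.I : ℝ) : ℂ)) / 2 := by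
    intro ξ
    rw [hfe]
    simp
    ring
  have hval : lapC τ z =
      ((((D2 z 1 1 : ℝ) : ℂ) - Complex.I * ((D2 z 1 Complex.I : ℝ) : ℂ)) / 2 +
        Complex.I * ((((D2 z Complex.I 1 : ℝ) : ℂ) -
          Complex.I * ((D2 z Complex.I Complex.I : ℝ) : ℂ)) / 2)) / 2 := by
    show (fderiv ℝ (dz fun w => (τ w : ℂ)) z 1 +
        Complex.I * fderiv ℝ (dz fun w => (τ w : ℂ)) z Complex.I) / 2 = _
    rw [e 1, e Complex.I]
  set A := D2 z 1 1
  set B := D2 z 1 Complex.I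
  set C := D2 z Complex.I 1
  set D := D2 z Complex.I Complex.I
  have : lapC τ z = (((A + D) / 4 : ℝ) : ℂ) + (((C - B) / 4 : ℝ) : ℂ) * Complex.I := by
    rw [hval]
    push_cast
    ring_nf
    rw [Complex.I_sq]
    ring
  rw [this]
  simp
lemma L_expand (L : ℂ →L[ℝ] ℝ) (a b : ℝ) :
    L ((a : ℂ) + (b : ℂ) * Complex.I) = a * L 1 + b * L Complex.I := by
  have h : ((a : ℂ) + (b : ℂ) * Complex.I) = a • (1 : ℂ) + b • Complex.I := by
    simp [Complex.real_smul]
  rw [h, map_add, _root_.map_smul, _root_.map_smul, smul_eq_mul, smul_eq_mul]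

lemma Q_expand (Q : ℂ →L[ℝ] ℂ →L[ℝ] ℝ) (a b x y : ℝ) :
    Q ((a : ℂ) + (b : ℂ) * Complex.I) ((x : ℂ) + (y : ℂ) * Complex.I) =
      a * x * Q 1 1 + a * y * Q 1 Complex.I + b * x * Q Complex.I 1 +
        b * y * Q Complex.I Complex.I := by
  rw [L_expand (Q ((a : ℂ) + (b : ℂ) * Complex.I)) x y]
  have h : ((a : ℂ) + (b : ℂ) * Complex.I) = a • (1 : ℂ) + b • Complex.I := by
    simp [Complex.real_smul]
  rw [h, map_add, _root_.map_smul, _root_.map_smul]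
  simp only [ContinuousLinearMap.add_apply, ContinuousLinearMap.coe_smul',
    Pi.smul_apply, smul_eq_mul]
  ring

lemma polar_identity (L : ℂ →L[ℝ] ℝ) (Q : ℂ →L[ℝ] ℂ →L[ℝ] ℝ) (r θ : ℝ) :
    r ^ 2 * (Q 1 1 + Q Complex.I Complex.I) =
      r ^ 2 * Q (ee θ) (ee θ) +
        (Q ((r : ℂ) * ee θ * Complex.I) ((r : ℂ) * ee θ * Complex.I) +
          L ((r : ℂ) * ee θ * Complex.I * Complex.I)) +
        r * L (ee θ) := by
  set c := Real.cos θ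
  set s := Real.sin θ
  have hcs : c ^ 2 + s ^ 2 = 1 := by
    simpa [c, s] using Real.cos_sq_add_sin_sq θ
  have h1 : ee θ = (c : ℂ) + (s : ℂ) * Complex.I := ee_eq θ
  rw [h1]
  have h2 : (r : ℂ) * ((c : ℂ) + (s : ℂ) * Complex.I) * Complex.I =
      ((-(r * s) : ℝ) : ℂ) + (((r * c) : ℝ) : ℂ) * Complex.I := by
    push_cast; linear_combination ((r : ℂ) * s) * Complex.I_sq
  have h3 : (r : ℂ) * ((c : ℂ) + (s : ℂ) * Complex.I) * Complex.I * Complex.I =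
      ((-(r * c) : ℝ) : ℂ) + ((-(r * s) : ℝ) : ℂ) * Complex.I := by
    push_cast; linear_combination ((r : ℂ) * c + (r : ℂ) * s * Complex.I) * Complex.I_sq
  rw [h3, h2, Q_expand, Q_expand, L_expand, L_expand]
  linear_combination (r ^ 2 * Q 1 1 + r ^ 2 * Q Complex.I Complex.I) * hcs.symm

set_option maxHeartbeats 1000000 in
/-- Let `τ` be `C²` and subharmonic (`∂∂̄ τ ≥ 0`) on a punctured disk `0 < |z| ≤ r₀`, with
`|τ(z)| ≲ |z|^{2-2a}` for some `1/2 < a < 1`.  Then, with `τ̃(r) = ∫₀^{2π} τ(r e^{iφ}) dφ`,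
the limit `lim_{r→0} r · dτ̃/dr` exists and equals `0`, and consequently the integrals
`∫_{δ<|z|<ε} (√-1/2) ∂∂̄ τ` tend to `0` as `ε > δ → 0`. -/
theorem subharmonic_annulus_integral_vanishing (a : ℝ) (ha1 : 1 / 2 < a) (ha2 : a < 1)
    (r0 : ℝ) (hr0 : 0 < r0) (τ : ℂ → ℝ)
    (hτ : ContDiffOn ℝ 2 (fun w => (τ w : ℂ)) {z : ℂ | 0 < ‖z‖ ∧ ‖z‖ ≤ r0})
    (hsub : ∀ z : ℂ, 0 < ‖z‖ → ‖z‖ ≤ r0 → 0 ≤ (lapC τ z).re)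
    (Cτ : ℝ) (hdecay : ∀ z : ℂ, 0 < ‖z‖ → ‖z‖ ≤ r0 → |τ z| ≤ Cτ * ‖z‖ ^ (2 - 2 * a)) :
    Tendsto
      (fun r : ℝ => r * deriv
        (fun r' : ℝ => ∫ θ in (0 : ℝ)..2 * Real.pi,
          τ ((r' : ℂ) * Complex.exp (θ * Complex.I))) r)
      (nhdsWithin 0 (Set.Ioi 0)) (nhds 0) ∧
    ∀ e : ℝ, 0 < e → ∃ r1 : ℝ, 0 < r1 ∧ ∀ δ ε : ℝ, 0 < δ → δ < ε → ε < r1 →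
      |∫ z in {w : ℂ | δ < ‖w‖ ∧ ‖w‖ < ε}, (lapC τ z).re| < e := by
  have pi_pos := Real.pi_pos
  set J := Ioo (0:ℝ) r0 with hJdef
  have hJo : IsOpen J := isOpen_Ioo
  have hmem : ∀ x ∈ J, ∀ θ : ℝ, ((x:ℂ) * ee θ) ∈ {z : ℂ | 0 < ‖z‖ ∧ ‖z‖ < r0} := by
    intro x hx θ
    have hn := norm_phi x θ hx.1.le
    simp only [mem_setOf_eq, hn]
    exact ⟨hx.1, hx.2⟩
  have hΦp : Continuous (fun p : ℝ × ℝ => ((p.1 : ℝ) : ℂ) * ee p.2) :=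
    (Complex.continuous_ofReal.comp continuous_fst).mul (continuous_ee.comp continuous_snd)
  have hmaps : MapsTo (fun p : ℝ × ℝ => ((p.1 : ℝ) : ℂ) * ee p.2) (J ×ˢ (univ : Set ℝ))
      {z : ℂ | 0 < ‖z‖ ∧ ‖z‖ < r0} := fun p hp => hmem p.1 hp.1 p.2
  have hDuP : ContinuousOn (fun p : ℝ × ℝ => fderiv ℝ τ ((p.1:ℂ) * ee p.2) (ee p.2))
      (J ×ˢ (univ : Set ℝ)) :=
    (ContinuousOn.comp (continuousOn_fderiv_tau hτ) hΦp.continuousOn hmaps).clm_apply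
      ((continuous_ee.comp continuous_snd).continuousOn)
  have hD2P : ContinuousOn (fun p : ℝ × ℝ =>
      fderiv ℝ (fderiv ℝ τ) ((p.1:ℂ) * ee p.2) (ee p.2) (ee p.2)) (J ×ˢ (univ : Set ℝ)) :=
    ((ContinuousOn.comp (continuousOn_fderiv2_tau hτ) hΦp.continuousOn hmaps).clm_apply
      ((continuous_ee.comp continuous_snd).continuousOn)).clm_apply
      ((continuous_ee.comp continuous_snd).continuousOn)
  have hTcont : ∀ x ∈ J, Continuous fun θ => τ ((x:ℂ) * ee θ) := fun x hx =>
    (contDiffOn_tau hτ).continuousOn.comp_continuous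
      (continuous_const.mul continuous_ee) (fun θ => hmem x hx θ)
  have hdiffT : ∀ x ∈ J, ∀ θ : ℝ, HasDerivAt (fun y : ℝ => τ ((y:ℂ) * ee θ))
      (fderiv ℝ τ ((x:ℂ) * ee θ) (ee θ)) x := fun x hx θ =>
    (hasFDerivAt_tau hτ (hmem x hx θ)).comp_hasDerivAt x (hasDerivAt_ofReal_mul x (ee θ))
  have hdiffA : ∀ x ∈ J, ∀ θ : ℝ, HasDerivAt (fun y : ℝ => fderiv ℝ τ ((y:ℂ) * ee θ) (ee θ))
      (fderiv ℝ (fderiv ℝ τ) ((x:ℂ) * ee θ) (ee θ) (ee θ)) x := by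
    intro x hx θ
    have h1 : HasDerivAt (fun y : ℝ => fderiv ℝ τ ((y:ℂ) * ee θ))
        (fderiv ℝ (fderiv ℝ τ) ((x:ℂ) * ee θ) (ee θ)) x :=
      (hasFDerivAt_fderiv_tau hτ (hmem x hx θ)).comp_hasDerivAt x (hasDerivAt_ofReal_mul x (ee θ))
    simpa using h1.clm_apply (hasDerivAt_const x (ee θ))
  set T : ℝ → ℝ := fun x => ∫ θ in (0:ℝ)..2*Real.pi, τ ((x:ℂ) * ee θ) with hTdef
  set A : ℝ → ℝ := fun x => ∫ θ in (0:ℝ)..2*Real.pi, fderiv ℝ τ ((x:ℂ) * ee θ) (ee θ) with hAdef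
  set B : ℝ → ℝ := fun x => ∫ θ in (0:ℝ)..2*Real.pi,
    fderiv ℝ (fderiv ℝ τ) ((x:ℂ) * ee θ) (ee θ) (ee θ) with hBdef
  set G : ℝ → ℝ := fun x => ∫ θ in (0:ℝ)..2*Real.pi, (lapC τ ((x:ℂ) * ee θ)).re with hGdef
  set H : ℝ → ℝ := fun x => x * A x with hHdef
  have hT' : ∀ r ∈ J, HasDerivAt T (A r) r := fun r hr =>
    hasDerivAt_param _ _ hJo hr hdiffT hDuP hTcont
  have hA' : ∀ r ∈ J, HasDerivAt A (B r) r := fun r hr =>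
    hasDerivAt_param _ _ hJo hr hdiffA hD2P (fun x hx =>
      hDuP.comp_continuous (continuous_const.prodMk continuous_id) (fun θ => ⟨hx, mem_univ _⟩))
  have hAc : ContinuousOn A J := fun r hr => ((hA' r hr).continuousAt).continuousWithinAt
  have hBc : ContinuousOn B J := continuousOn_param _ hJo hD2P
  have hDuθ : ∀ r ∈ J, Continuous fun θ => fderiv ℝ τ ((r:ℂ) * ee θ) := fun r hr =>
    (continuousOn_fderiv_tau hτ).comp_continuous (continuous_const.mul continuous_ee)
      (fun θ => hmem r hr θ)
  have hD2θ : ∀ r ∈ J, Continuous fun θ => fderiv ℝ (fderiv ℝ τ) ((r:ℂ) * ee θ) := fun r hr =>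
    (continuousOn_fderiv2_tau hτ).comp_continuous (continuous_const.mul continuous_ee)
      (fun θ => hmem r hr θ)
  have hgθ : ∀ r ∈ J, Continuous fun θ => (lapC τ ((r:ℂ) * ee θ)).re := by
    intro r hr
    have hcont2 : Continuous fun θ => (fderiv ℝ (fderiv ℝ τ) ((r:ℂ) * ee θ) 1 1
        + fderiv ℝ (fderiv ℝ τ) ((r:ℂ) * ee θ) Complex.I Complex.I)/4 :=
      ((((hD2θ r hr).clm_apply continuous_const).clm_apply continuous_const).add
        (((hD2θ r hr).clm_apply continuous_const).clm_apply continuous_const)).div_const 4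
    exact hcont2.congr (fun θ => (lapC_eq hτ (hmem r hr θ)).symm)
  have hAB : ∀ r ∈ J, A r + r * B r = 4 * (r * G r) := by
    intro r hr
    have hre : r ≠ 0 := ne_of_gt hr.1
    have hveec : Continuous fun θ : ℝ => (r:ℂ) * ee θ * Complex.I :=
      (continuous_const.mul continuous_ee).mul continuous_const
    have hPder : ∀ θ : ℝ, HasDerivAt
        (fun θ' => fderiv ℝ τ ((r:ℂ) * ee θ') ((r:ℂ) * ee θ' * Complex.I))
        (fderiv ℝ (fderiv ℝ τ) ((r:ℂ) * ee θ) ((r:ℂ) * ee θ * Complex.I) ((r:ℂ) * ee θ * Complex.I)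
          + fderiv ℝ τ ((r:ℂ) * ee θ) ((r:ℂ) * ee θ * Complex.I * Complex.I)) θ := by
      intro θ
      have hc : HasDerivAt (fun θ' => fderiv ℝ τ ((r:ℂ) * ee θ'))
          (fderiv ℝ (fderiv ℝ τ) ((r:ℂ) * ee θ) ((r:ℂ) * ee θ * Complex.I)) θ :=
        (hasFDerivAt_fderiv_tau hτ (hmem r hr θ)).comp_hasDerivAt θ (hasDerivAt_phi_theta r θ)
      have hu : HasDerivAt (fun θ' => (r:ℂ) * ee θ' * Complex.I)
          ((r:ℂ) * ee θ * Complex.I * Complex.I) θ :=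
        (hasDerivAt_phi_theta r θ).mul_const Complex.I
      exact hc.clm_apply hu
    have hPcont : Continuous fun θ =>
        fderiv ℝ (fderiv ℝ τ) ((r:ℂ) * ee θ) ((r:ℂ) * ee θ * Complex.I) ((r:ℂ) * ee θ * Complex.I)
          + fderiv ℝ τ ((r:ℂ) * ee θ) ((r:ℂ) * ee θ * Complex.I * Complex.I) :=
      (((hD2θ r hr).clm_apply hveec).clm_apply hveec).add
        ((hDuθ r hr).clm_apply (hveec.mul continuous_const))
    have hPint : (∫ θ in (0:ℝ)..2*Real.pi,
        (fderiv ℝ (fderiv ℝ τ) ((r:ℂ) * ee θ) ((r:ℂ) * ee θ * Complex.I) ((r:ℂ) * ee θ * Complex.I)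
          + fderiv ℝ τ ((r:ℂ) * ee θ) ((r:ℂ) * ee θ * Complex.I * Complex.I))) = 0 := by
      rw [intervalIntegral.integral_eq_sub_of_hasDerivAt (fun θ _ => hPder θ)
        (hPcont.intervalIntegrable _ _)]
      have h2 : ee (2*Real.pi) = ee 0 := by simpa using ee_periodic 0
      rw [h2, sub_self]
    have hDuec : Continuous fun θ => fderiv ℝ τ ((r:ℂ) * ee θ) (ee θ) :=
      (hDuθ r hr).clm_apply continuous_ee
    have hD2eec : Continuous fun θ => fderiv ℝ (fderiv ℝ τ) ((r:ℂ) * ee θ) (ee θ) (ee θ) :=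
      ((hD2θ r hr).clm_apply continuous_ee).clm_apply continuous_ee
    have hptw : ∀ θ : ℝ, r * fderiv ℝ τ ((r:ℂ) * ee θ) (ee θ) =
        (4*r^2) * (lapC τ ((r:ℂ) * ee θ)).re
        - r^2 * fderiv ℝ (fderiv ℝ τ) ((r:ℂ) * ee θ) (ee θ) (ee θ)
        - (fderiv ℝ (fderiv ℝ τ) ((r:ℂ) * ee θ) ((r:ℂ) * ee θ * Complex.I) ((r:ℂ) * ee θ * Complex.I)
           + fderiv ℝ τ ((r:ℂ) * ee θ) ((r:ℂ) * ee θ * Complex.I * Complex.I)) := by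
      intro θ
      have h1 := polar_identity (fderiv ℝ τ ((r:ℂ) * ee θ))
        (fderiv ℝ (fderiv ℝ τ) ((r:ℂ) * ee θ)) r θ
      have h2 := lapC_eq hτ (hmem r hr θ)
      linear_combination (-1 : ℝ) * h1 - 4*r^2 * h2
    have int1 : IntervalIntegrable (fun θ => (4*r^2) * (lapC τ ((r:ℂ) * ee θ)).re)
        volume 0 (2*Real.pi) := (continuous_const.mul (hgθ r hr)).intervalIntegrable _ _
    have int2 : IntervalIntegrable
        (fun θ => r^2 * fderiv ℝ (fderiv ℝ τ) ((r:ℂ) * ee θ) (ee θ) (ee θ))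
        volume 0 (2*Real.pi) := (continuous_const.mul hD2eec).intervalIntegrable _ _
    have intP : IntervalIntegrable (fun θ =>
        fderiv ℝ (fderiv ℝ τ) ((r:ℂ) * ee θ) ((r:ℂ) * ee θ * Complex.I) ((r:ℂ) * ee θ * Complex.I)
          + fderiv ℝ τ ((r:ℂ) * ee θ) ((r:ℂ) * ee θ * Complex.I * Complex.I))
        volume 0 (2*Real.pi) := hPcont.intervalIntegrable _ _
    have e1 : r * A r = ∫ θ in (0:ℝ)..2*Real.pi, r * fderiv ℝ τ ((r:ℂ) * ee θ) (ee θ) := by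
      simp only [hAdef]
      exact (intervalIntegral.integral_const_mul _ _).symm
    have e3 : (∫ θ in (0:ℝ)..2*Real.pi, r * fderiv ℝ τ ((r:ℂ) * ee θ) (ee θ)) =
        ∫ θ in (0:ℝ)..2*Real.pi, ((4*r^2) * (lapC τ ((r:ℂ) * ee θ)).re
          - r^2 * fderiv ℝ (fderiv ℝ τ) ((r:ℂ) * ee θ) (ee θ) (ee θ)
          - (fderiv ℝ (fderiv ℝ τ) ((r:ℂ) * ee θ) ((r:ℂ) * ee θ * Complex.I) ((r:ℂ) * ee θ * Complex.I)
             + fderiv ℝ τ ((r:ℂ) * ee θ) ((r:ℂ) * ee θ * Complex.I * Complex.I))) :=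
      intervalIntegral.integral_congr (fun θ _ => hptw θ)
    have e2 : (∫ θ in (0:ℝ)..2*Real.pi, ((4*r^2) * (lapC τ ((r:ℂ) * ee θ)).re
          - r^2 * fderiv ℝ (fderiv ℝ τ) ((r:ℂ) * ee θ) (ee θ) (ee θ)
          - (fderiv ℝ (fderiv ℝ τ) ((r:ℂ) * ee θ) ((r:ℂ) * ee θ * Complex.I) ((r:ℂ) * ee θ * Complex.I)
             + fderiv ℝ τ ((r:ℂ) * ee θ) ((r:ℂ) * ee θ * Complex.I * Complex.I)))) =
        (4*r^2) * G r - r^2 * B r - 0 := by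
      rw [intervalIntegral.integral_sub (int1.sub int2) intP,
        intervalIntegral.integral_sub int1 int2,
        intervalIntegral.integral_const_mul, intervalIntegral.integral_const_mul, hPint]
    have e4 : r * A r = (4*r^2) * G r - r^2 * B r := by
      rw [e1, e3, e2, sub_zero]
    apply mul_left_cancel₀ hre
    linear_combination e4
  have hGnn : ∀ r ∈ J, 0 ≤ G r := by
    intro r hr
    apply intervalIntegral.integral_nonneg Real.two_pi_pos.le
    intro θ _
    exact hsub _ (hmem r hr θ).1 (le_of_lt (hmem r hr θ).2)
  have hH' : ∀ r ∈ J, HasDerivAt H (4 * (r * G r)) r := by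
    intro r hr
    have h1 := (hasDerivAt_id r).mul (hA' r hr)
    have h2 : HasDerivAt H (1 * A r + r * B r) r := h1
    rw [one_mul, hAB r hr] at h2
    exact h2
  have hmono : MonotoneOn H J := by
    apply monotoneOn_of_deriv_nonneg (convex_Ioo 0 r0)
    · intro x hx; exact ((hH' x hx).continuousAt).continuousWithinAt
    · intro x hx; rw [interior_Ioo] at hx
      exact ((hH' x hx).differentiableAt).differentiableWithinAt
    · intro x hx; rw [interior_Ioo] at hx
      rw [(hH' x hx).deriv]
      have := hGnn x hx
      have := hx.1
      positivity
  have hann : ∀ δ ε : ℝ, 0 < δ → δ < ε → ε < r0 →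
      (∫ z in {w : ℂ | δ < ‖w‖ ∧ ‖w‖ < ε}, (lapC τ z).re) = (H ε - H δ)/4 := by
    intro δ ε hδ hδε hεr0
    have hε0 : 0 < ε := hδ.trans hδε
    have hgmeas : Measurable fun z => (lapC τ z).re := by
      simp only [lapC, dbar]
      have m1 : Measurable fun z => fderiv ℝ (dz fun w => ((τ w : ℝ) : ℂ)) z 1 :=
        measurable_fderiv_apply_const ℝ _ 1
      have m2 : Measurable fun z => fderiv ℝ (dz fun w => ((τ w : ℝ) : ℂ)) z Complex.I :=
        measurable_fderiv_apply_const ℝ _ Complex.I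
      exact Complex.measurable_re.comp ((m1.add (m2.const_mul Complex.I)).div_const 2)
    have hgcontU : ContinuousOn (fun z => (lapC τ z).re) {z : ℂ | 0 < ‖z‖ ∧ ‖z‖ < r0} := by
      have hc : ContinuousOn (fun z => (fderiv ℝ (fderiv ℝ τ) z 1 1
          + fderiv ℝ (fderiv ℝ τ) z Complex.I Complex.I)/4)
          {z : ℂ | 0 < ‖z‖ ∧ ‖z‖ < r0} :=
        ((((continuousOn_fderiv2_tau hτ).clm_apply continuousOn_const).clm_apply
            continuousOn_const).add
          (((continuousOn_fderiv2_tau hτ).clm_apply continuousOn_const).clm_apply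
            continuousOn_const)).div_const 4
      exact hc.congr (fun z hz => lapC_eq hτ hz)
    set S : Set ℂ := {w : ℂ | δ < ‖w‖ ∧ ‖w‖ < ε} with hSdef
    have hSopen : IsOpen S := by
      have h1 : IsOpen {w : ℂ | δ < ‖w‖} := isOpen_lt continuous_const continuous_norm
      have h2 : IsOpen {w : ℂ | ‖w‖ < ε} := isOpen_lt continuous_norm continuous_const
      exact h1.inter h2
    have hKsub : Metric.closedBall (0:ℂ) ε \ Metric.ball (0:ℂ) δ ⊆
        {z : ℂ | 0 < ‖z‖ ∧ ‖z‖ < r0} := by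
      intro z hz
      rw [mem_diff, mem_closedBall_zero_iff, mem_ball_zero_iff] at hz
      exact ⟨lt_of_lt_of_le hδ (not_lt.1 hz.2), lt_of_le_of_lt hz.1 hεr0⟩
    obtain ⟨C0, hC0⟩ := ((isCompact_closedBall (0:ℂ) ε).diff
      Metric.isOpen_ball).exists_bound_of_continuousOn (hgcontU.mono hKsub)
    set C := max C0 0 with hCdef
    have hC : ∀ z ∈ S, |(lapC τ z).re| ≤ C := by
      intro z hz
      refine le_trans ?_ (le_max_left _ _)
      have := hC0 z (by
        rw [mem_diff, mem_closedBall_zero_iff, mem_ball_zero_iff]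
        exact ⟨hz.2.le, not_lt.2 hz.1.le⟩)
      simpa [Real.norm_eq_abs] using this
    have hCnn : 0 ≤ C := le_max_right _ _
    have step1 : (∫ z in S, (lapC τ z).re)
        = ∫ z : ℂ, indicator S (fun z => (lapC τ z).re) z :=
      (MeasureTheory.integral_indicator hSopen.measurableSet).symm
    rw [step1, ← Complex.integral_comp_polarCoord_symm]
    have hsymm : ∀ p : ℝ × ℝ, Complex.polarCoord.symm p = ((p.1 : ℝ) : ℂ) * ee p.2 := by
      intro p
      rw [Complex.polarCoord_symm_apply, ee_eq]
    simp only [hsymm, smul_eq_mul]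
    set q : ℝ × ℝ → ℝ :=
      fun p => p.1 * indicator S (fun z => (lapC τ z).re) (((p.1:ℝ):ℂ) * ee p.2) with hqdef
    have hVsub : (Ioo δ ε ×ˢ Ioo (-Real.pi) Real.pi) ⊆ polarCoord.target := by
      rw [polarCoord_target]
      intro p hp
      exact ⟨hδ.trans hp.1.1, hp.2⟩
    have hq0 : ∀ p ∈ polarCoord.target \ (Ioo δ ε ×ˢ Ioo (-Real.pi) Real.pi), q p = 0 := by
      intro p hp
      rcases hp with ⟨hpt, hpV⟩
      rw [polarCoord_target] at hpt
      have hp1 : (0:ℝ) < p.1 := hpt.1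
      have hnotin : p.1 ∉ Ioo δ ε := fun hmem' => hpV ⟨hmem', hpt.2⟩
      have hnorm : ‖((p.1:ℝ):ℂ) * ee p.2‖ = p.1 := norm_phi _ _ hp1.le
      have hnotS : (((p.1:ℝ):ℂ) * ee p.2) ∉ S := by
        intro hS
        rw [hSdef] at hS
        apply hnotin
        rw [mem_setOf_eq, hnorm] at hS
        exact hS
      simp [hqdef, indicator_of_notMem hnotS]
    rw [setIntegral_eq_of_subset_of_forall_diff_eq_zero
      polarCoord.open_target.measurableSet hVsub hq0]
    have hqmeas : Measurable q := by
      apply Measurable.mul measurable_fst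
      exact (hgmeas.indicator hSopen.measurableSet).comp hΦp.measurable
    have hVfin : volume (Ioo δ ε ×ˢ Ioo (-Real.pi) Real.pi) ≠ ⊤ := by
      rw [MeasureTheory.Measure.volume_eq_prod, Measure.prod_prod,
        Real.volume_Ioo, Real.volume_Ioo]
      exact ENNReal.mul_ne_top ENNReal.ofReal_ne_top ENNReal.ofReal_ne_top
    have hqint : IntegrableOn q (Ioo δ ε ×ˢ Ioo (-Real.pi) Real.pi) volume := by
      apply Measure.integrableOn_of_bounded (M := ε * C) hVfin hqmeas.aestronglyMeasurable
      rw [ae_restrict_iff' (measurableSet_Ioo.prod measurableSet_Ioo)]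
      filter_upwards with p hp
      rcases hp with ⟨hp1, hp2⟩
      rw [Real.norm_eq_abs, hqdef]
      simp only
      by_cases hS : (((p.1:ℝ):ℂ) * ee p.2) ∈ S
      · rw [indicator_of_mem hS, abs_mul]
        have hb1 : |p.1| ≤ ε := by
          rw [_root_.abs_of_pos (hδ.trans hp1.1)]
          exact hp1.2.le
        exact mul_le_mul hb1 (hC _ hS) (abs_nonneg _) hε0.le
      · rw [indicator_of_notMem hS]
        simp [mul_nonneg hε0.le hCnn]
    rw [MeasureTheory.Measure.volume_eq_prod] at hqint ⊢
    rw [setIntegral_prod _ hqint]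
    have hinner : ∀ x ∈ Ioo δ ε, (∫ y in Ioo (-Real.pi) Real.pi, q (x, y)) = x * G x := by
      intro x hx
      have hx0 : 0 < x := hδ.trans hx.1
      have hxJ : x ∈ J := ⟨hx0, hx.2.trans hεr0⟩
      have hmemS : ∀ y : ℝ, ((x:ℂ) * ee y) ∈ S := by
        intro y
        have hn := norm_phi x y hx0.le
        rw [hSdef]
        rw [mem_setOf_eq, hn]
        exact ⟨hx.1, hx.2⟩
      have h1 : (fun y => q (x, y)) = fun y => x * (lapC τ ((x:ℂ) * ee y)).re := by
        funext y
        rw [hqdef]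
        simp only
        rw [indicator_of_mem (hmemS y)]
      rw [h1, MeasureTheory.integral_const_mul]
      congr 1
      have h2 : (∫ y in Ioo (-Real.pi) Real.pi, (lapC τ ((x:ℂ) * ee y)).re)
          = ∫ y in (-Real.pi)..Real.pi, (lapC τ ((x:ℂ) * ee y)).re := by
        rw [intervalIntegral.integral_of_le (by linarith), integral_Ioc_eq_integral_Ioo]
      rw [h2]
      have hper : Function.Periodic (fun y => (lapC τ ((x:ℂ) * ee y)).re) (2*Real.pi) := by
        intro y
        simp only [ee_periodic y]
      have h3 := hper.intervalIntegral_add_eq (-Real.pi) 0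
      rw [show -Real.pi + 2*Real.pi = Real.pi by ring, zero_add] at h3
      rw [h3]
    rw [setIntegral_congr_fun measurableSet_Ioo hinner]
    have h4 : (∫ x in Ioo δ ε, x * G x) = ∫ x in δ..ε, x * G x := by
      rw [intervalIntegral.integral_of_le hδε.le, integral_Ioc_eq_integral_Ioo]
    rw [h4]
    have hsubJ2 : uIcc δ ε ⊆ J := by
      rw [uIcc_of_le hδε.le]
      intro x hx
      exact ⟨lt_of_lt_of_le hδ hx.1, lt_of_le_of_lt hx.2 hεr0⟩
    have hconint : ContinuousOn (fun x => 4 * (x * G x)) (uIcc δ ε) := by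
      apply ContinuousOn.congr ((hAc.add (continuousOn_id.mul hBc)).mono hsubJ2)
      intro x hx
      exact (hAB x (hsubJ2 hx)).symm
    have hFTC2 : ∫ x in δ..ε, 4 * (x * G x) = H ε - H δ := by
      apply intervalIntegral.integral_eq_sub_of_hasDerivAt
      · intro x hx
        exact hH' x (hsubJ2 hx)
      · exact hconint.intervalIntegrable
    have h5 : (∫ x in δ..ε, 4 * (x * G x)) = 4 * ∫ x in δ..ε, x * G x :=
      intervalIntegral.integral_const_mul _ _
    rw [h5] at hFTC2
    linarith
  -- decay bound on T
  have hCτ : 0 ≤ Cτ := by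
    have h1 := hdecay ((r0 : ℝ) : ℂ) (by simp [abs_of_pos hr0, hr0])
      (by simp [abs_of_pos hr0])
    have h2 : (0:ℝ) < r0 ^ (2 - 2*a) := Real.rpow_pos_of_pos hr0 _
    simp [Complex.norm_real, Real.norm_eq_abs, _root_.abs_of_pos hr0] at h1
    nlinarith [abs_nonneg (τ ((r0:ℝ):ℂ))]
  have hTbdd : ∀ x : ℝ, 0 < x → x ≤ 1 → x < r0 → |T x| ≤ Cτ * (2*Real.pi) := by
    intro x hx hx1 hxr0
    have hb : ∀ θ ∈ Set.uIoc (0:ℝ) (2*Real.pi), ‖τ ((x:ℂ) * ee θ)‖ ≤ Cτ := by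
      intro θ _
      have hn := norm_phi x θ hx.le
      have h1 := hdecay ((x:ℂ) * ee θ) (by rw [hn]; exact hx) (by rw [hn]; exact hxr0.le)
      rw [hn] at h1
      have h2 : x ^ (2 - 2*a) ≤ 1 :=
        Real.rpow_le_one hx.le hx1 (by linarith)
      calc ‖τ ((x:ℂ) * ee θ)‖ = |τ ((x:ℂ) * ee θ)| := rfl
        _ ≤ Cτ * x ^ (2 - 2*a) := h1
        _ ≤ Cτ * 1 := by nlinarith
        _ = Cτ := mul_one Cτ
    have := intervalIntegral.norm_integral_le_of_norm_le_const (C := Cτ) hb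
    simpa [Real.two_pi_pos.le, _root_.abs_of_nonneg Real.two_pi_pos.le] using this
  -- the two log-divergence claims
  have claimA : ∀ c : ℝ, 0 < c → ∀ r2, r2 ∈ J → ¬ (∀ x ∈ Ioo (0:ℝ) r2, H x ≤ -c) := by
    intro c hc r2 hr2 hcon
    have hr20 : 0 < r2 := hr2.1
    set b := r2/2 with hbdef
    have hb0 : 0 < b := by positivity
    have hbr2 : b < r2 := by simp only [hbdef]; linarith
    have hbJ : b ∈ J := ⟨hb0, lt_trans hbr2 hr2.2⟩
    have hb1 : b < r0 := hbJ.2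
    set M := Cτ * (2*Real.pi) + |T b| with hMdef
    have hM0 : 0 ≤ M := add_nonneg (mul_nonneg hCτ (by positivity)) (abs_nonneg _)
    set δ : ℝ := min (Real.exp (Real.log b - (2*M+1)/c)) (min 1 b / 2) with hδdef
    have hmin1b : 0 < min 1 b := lt_min one_pos hb0
    have hδ0 : 0 < δ := lt_min (Real.exp_pos _) (by positivity)
    have hδb : δ < b := lt_of_le_of_lt (min_le_right _ _)
      (by have := min_le_right 1 b; linarith)
    have hδ1 : δ ≤ 1 := le_trans (min_le_right _ _)
      (by have := min_le_left 1 b; linarith)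
    have hsubJ : uIcc δ b ⊆ J := by
      rw [uIcc_of_le hδb.le]
      intro x hx
      exact ⟨lt_of_lt_of_le hδ0 hx.1, lt_of_le_of_lt hx.2 hb1⟩
    have hTderiv : ∀ x ∈ uIcc δ b, HasDerivAt T (A x) x := fun x hx => hT' x (hsubJ hx)
    have hAint : IntervalIntegrable A volume δ b := (hAc.mono hsubJ).intervalIntegrable
    have hFTC : ∫ x in δ..b, A x = T b - T δ :=
      intervalIntegral.integral_eq_sub_of_hasDerivAt hTderiv hAint
    have hinvint : IntervalIntegrable (fun x : ℝ => -c * x⁻¹) volume δ b := by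
      apply ContinuousOn.intervalIntegrable
      apply continuousOn_const.mul
      apply ContinuousOn.mono continuousOn_inv₀
      rw [uIcc_of_le hδb.le]
      intro x hx
      exact ne_of_gt (lt_of_lt_of_le hδ0 hx.1)
    have hcomp : ∫ x in δ..b, A x ≤ ∫ x in δ..b, -c * x⁻¹ := by
      apply intervalIntegral.integral_mono_on hδb.le hAint hinvint
      intro x hx
      have hx0 : 0 < x := lt_of_lt_of_le hδ0 hx.1
      have hHx := hcon x ⟨hx0, lt_of_le_of_lt hx.2 hbr2⟩
      have hHxval : H x = x * A x := rfl
      have hAx : A x ≤ -c / x := by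
        rw [le_div_iff₀ hx0]
        nlinarith
      calc A x ≤ -c / x := hAx
        _ = -c * x⁻¹ := by ring
    have hlog : ∫ x in δ..b, -c * x⁻¹ = -c * Real.log (b/δ) := by
      rw [intervalIntegral.integral_const_mul, integral_inv_of_pos hδ0 hb0]
    have hTδ : T δ ≥ T b + c * Real.log (b/δ) := by
      rw [hFTC, hlog] at hcomp
      linarith
    have hlogδ : Real.log δ ≤ Real.log b - (2*M+1)/c := by
      calc Real.log δ ≤ Real.log (Real.exp (Real.log b - (2*M+1)/c)) :=
            Real.log_le_log hδ0 (min_le_left _ _)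
        _ = Real.log b - (2*M+1)/c := Real.log_exp _
    have hlogbδ : (2*M+1)/c ≤ Real.log (b/δ) := by
      rw [Real.log_div (ne_of_gt hb0) (ne_of_gt hδ0)]
      linarith
    have hclog : 2*M+1 ≤ c * Real.log (b/δ) := by
      have h1 : c * ((2*M+1)/c) ≤ c * Real.log (b/δ) :=
        mul_le_mul_of_nonneg_left hlogbδ hc.le
      rwa [mul_div_cancel₀ _ (ne_of_gt hc)] at h1
    have hTδsmall : |T δ| ≤ Cτ * (2*Real.pi) := hTbdd δ hδ0 hδ1 (lt_trans hδb hb1)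
    have h2 : T b ≥ -|T b| := neg_abs_le _
    have h3 : T δ ≤ Cτ * (2*Real.pi) := le_trans (le_abs_self _) hTδsmall
    simp only [hMdef] at hclog
    linarith
  have claimB : ∀ c : ℝ, 0 < c → ∀ r2, r2 ∈ J → ¬ (∀ x ∈ Ioo (0:ℝ) r2, c ≤ H x) := by
    intro c hc r2 hr2 hcon
    have hr20 : 0 < r2 := hr2.1
    set b := r2/2 with hbdef
    have hb0 : 0 < b := by positivity
    have hbr2 : b < r2 := by simp only [hbdef]; linarith
    have hbJ : b ∈ J := ⟨hb0, lt_trans hbr2 hr2.2⟩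
    have hb1 : b < r0 := hbJ.2
    set M := Cτ * (2*Real.pi) + |T b| with hMdef
    have hM0 : 0 ≤ M := add_nonneg (mul_nonneg hCτ (by positivity)) (abs_nonneg _)
    set δ : ℝ := min (Real.exp (Real.log b - (2*M+1)/c)) (min 1 b / 2) with hδdef
    have hmin1b : 0 < min 1 b := lt_min one_pos hb0
    have hδ0 : 0 < δ := lt_min (Real.exp_pos _) (by positivity)
    have hδb : δ < b := lt_of_le_of_lt (min_le_right _ _)
      (by have := min_le_right 1 b; linarith)
    have hδ1 : δ ≤ 1 := le_trans (min_le_right _ _)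
      (by have := min_le_left 1 b; linarith)
    have hsubJ : uIcc δ b ⊆ J := by
      rw [uIcc_of_le hδb.le]
      intro x hx
      exact ⟨lt_of_lt_of_le hδ0 hx.1, lt_of_le_of_lt hx.2 hb1⟩
    have hTderiv : ∀ x ∈ uIcc δ b, HasDerivAt T (A x) x := fun x hx => hT' x (hsubJ hx)
    have hAint : IntervalIntegrable A volume δ b := (hAc.mono hsubJ).intervalIntegrable
    have hFTC : ∫ x in δ..b, A x = T b - T δ :=
      intervalIntegral.integral_eq_sub_of_hasDerivAt hTderiv hAint
    have hinvint : IntervalIntegrable (fun x : ℝ => c * x⁻¹) volume δ b := by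
      apply ContinuousOn.intervalIntegrable
      apply continuousOn_const.mul
      apply ContinuousOn.mono continuousOn_inv₀
      rw [uIcc_of_le hδb.le]
      intro x hx
      exact ne_of_gt (lt_of_lt_of_le hδ0 hx.1)
    have hcomp : ∫ x in δ..b, c * x⁻¹ ≤ ∫ x in δ..b, A x := by
      apply intervalIntegral.integral_mono_on hδb.le hinvint hAint
      intro x hx
      have hx0 : 0 < x := lt_of_lt_of_le hδ0 hx.1
      have hHx := hcon x ⟨hx0, lt_of_le_of_lt hx.2 hbr2⟩
      have hHxval : H x = x * A x := rfl
      have hAx : c / x ≤ A x := by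
        rw [div_le_iff₀ hx0]
        nlinarith
      calc c * x⁻¹ = c / x := by ring
        _ ≤ A x := hAx
    have hlog : ∫ x in δ..b, c * x⁻¹ = c * Real.log (b/δ) := by
      rw [intervalIntegral.integral_const_mul, integral_inv_of_pos hδ0 hb0]
    have hTδ : T δ ≤ T b - c * Real.log (b/δ) := by
      rw [hlog, hFTC] at hcomp
      linarith
    have hlogδ : Real.log δ ≤ Real.log b - (2*M+1)/c := by
      calc Real.log δ ≤ Real.log (Real.exp (Real.log b - (2*M+1)/c)) :=
            Real.log_le_log hδ0 (min_le_left _ _)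
        _ = Real.log b - (2*M+1)/c := Real.log_exp _
    have hlogbδ : (2*M+1)/c ≤ Real.log (b/δ) := by
      rw [Real.log_div (ne_of_gt hb0) (ne_of_gt hδ0)]
      linarith
    have hclog : 2*M+1 ≤ c * Real.log (b/δ) := by
      have h1 : c * ((2*M+1)/c) ≤ c * Real.log (b/δ) :=
        mul_le_mul_of_nonneg_left hlogbδ hc.le
      rwa [mul_div_cancel₀ _ (ne_of_gt hc)] at h1
    have hTδsmall : |T δ| ≤ Cτ * (2*Real.pi) := hTbdd δ hδ0 hδ1 (lt_trans hδb hb1)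
    have h2 : T b ≤ |T b| := le_abs_self _
    have h3 : -(Cτ * (2*Real.pi)) ≤ T δ := neg_le_of_abs_le hTδsmall
    simp only [hMdef] at hclog
    linarith
  -- limit of H at 0+ is 0
  set m : ℝ := min (r0/2) 1 with hmdef
  have hm0 : 0 < m := lt_min (by linarith) one_pos
  have hmJ : m ∈ J := ⟨hm0, lt_of_le_of_lt (min_le_left _ _) (by linarith)⟩
  have hIooJ : Ioo (0:ℝ) m ⊆ J := fun x hx => ⟨hx.1, hx.2.trans hmJ.2⟩
  have hbdd : BddBelow (H '' Ioo (0:ℝ) m) := by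
    by_contra hnb
    obtain ⟨y, hy, hylt⟩ : ∃ y ∈ H '' Ioo (0:ℝ) m, y < -1 := by
      rcases not_bddBelow_iff.1 hnb (-1) with ⟨y, hy, hylt⟩
      exact ⟨y, hy, hylt⟩
    obtain ⟨u, hu, rfl⟩ := hy
    apply claimA 1 one_pos u (hIooJ hu)
    intro x hx
    have : H x ≤ H u := hmono (hIooJ ⟨hx.1, hx.2.trans hu.2⟩) (hIooJ hu) hx.2.le
    linarith
  have hnonempty : (Ioo (0:ℝ) m).Nonempty := ⟨m/2, by constructor <;> [positivity; linarith]⟩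
  set L : ℝ := sInf (H '' Ioo (0:ℝ) m) with hLdef
  have hlim : Tendsto H (nhdsWithin 0 (Set.Ioi 0)) (nhds L) :=
    MonotoneOn.tendsto_nhdsWithin_Ioo_right hnonempty (hmono.mono hIooJ) hbdd
  have hL0 : L = 0 := by
    rcases lt_trichotomy L 0 with hL | hL | hL
    · exfalso
      have hev : {x | H x < L/2} ∈ nhdsWithin 0 (Set.Ioi 0) :=
        hlim (Iio_mem_nhds (by linarith))
      obtain ⟨u, hu0, hsub'⟩ := mem_nhdsGT_iff_exists_Ioo_subset.1 hev
      apply claimA (-(L/2)) (by linarith) (min u m)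
        ⟨lt_min hu0 hm0, lt_of_le_of_lt (min_le_right u m) hmJ.2⟩
      intro x hx
      have hxu : x ∈ Ioo (0:ℝ) u := ⟨hx.1, hx.2.trans_le (min_le_left _ _)⟩
      have := hsub' hxu
      simp only [mem_setOf_eq] at this
      linarith
    · exact hL
    · exfalso
      apply claimB L hL m hmJ
      intro x hx
      exact csInf_le hbdd (mem_image_of_mem _ hx)
  rw [hL0] at hlim
  constructor
  · -- first conclusion
    have hEq : (fun r : ℝ => r * deriv
        (fun r' : ℝ => ∫ θ in (0 : ℝ)..2 * Real.pi,
          τ ((r' : ℂ) * Complex.exp (θ * Complex.I))) r) =ᶠ[nhdsWithin 0 (Set.Ioi 0)] H := by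
      have hmem' : Ioo (0:ℝ) m ∈ nhdsWithin 0 (Set.Ioi 0) :=
        mem_nhdsGT_iff_exists_Ioo_subset.2 ⟨m, hm0, fun x hx => hx⟩
      filter_upwards [hmem'] with x hx
      have : deriv T x = A x := (hT' x (hIooJ hx)).deriv
      simp only [hTdef] at this
      rw [show (fun r' : ℝ => ∫ θ in (0 : ℝ)..2 * Real.pi,
          τ ((r' : ℂ) * Complex.exp (θ * Complex.I))) = T from rfl, this, hHdef]
    exact hlim.congr' hEq.symm
  · -- second conclusion
    intro e he
    have hev : {x | |H x| < 2*e} ∈ nhdsWithin 0 (Set.Ioi 0) := by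
      have h1 : Tendsto (fun x => |H x|) (nhdsWithin 0 (Set.Ioi 0)) (nhds 0) := by
        simpa using hlim.abs
      exact h1 (Iio_mem_nhds (by linarith))
    obtain ⟨u, hu0, hsub'⟩ := mem_nhdsGT_iff_exists_Ioo_subset.1 hev
    refine ⟨min u m, lt_min hu0 hm0, ?_⟩
    intro δ ε hδ hδε hεlt
    have hδm : δ ∈ Ioo (0:ℝ) u := ⟨hδ, (hδε.trans hεlt).trans_le (min_le_left _ _)⟩
    have hεm : ε ∈ Ioo (0:ℝ) u := ⟨hδ.trans hδε, hεlt.trans_le (min_le_left _ _)⟩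
    have h1 : |H δ| < 2*e := hsub' hδm
    have h2 : |H ε| < 2*e := hsub' hεm
    have hεr0 : ε < r0 := lt_of_lt_of_le (hεlt.trans_le (min_le_right _ _))
      (le_trans (min_le_left _ _) (by linarith))
    rw [hann δ ε hδ hδε hεr0]
    rw [abs_div]
    have : |H ε - H δ| < 4 * e := by
      calc |H ε - H δ| ≤ |H ε| + |H δ| := abs_sub _ _
        _ < 4*e := by linarith
    calc |H ε - H δ| / |4| = |H ε - H δ| / 4 := by norm_num
      _ < e := by linarith
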